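/- arXiv:1403.6521 — 4 statements merged into one kernel-verified Lean document; each statement's English description precedes it below -/
import Mathlib

section
/- Let q ≥ 2 be a prime power, m ≥ 0, and α = (α_1,…,α_ℓ) a composition of n with partial sums A_i (A_0 = 0), and let L be the largest index 0 ≤ L ≤ ℓ with A_L ≤ m. Define α̂ := α if L = ℓ, and α̂ := (α_1,…,α_L, m−A_L, 0,…,0) if L < ℓ; for 1 ≤ k ≤ L define α̂^{(k)} := (α_1,…,α_{k−1}, α_k−1, α_{k+1},…,α_ℓ) if L = ℓ and α̂^{(k)} := (α_1,…,α_{k−1}, α_k−1, α_{k+1},…,α_L, m−A_L+1, 0,…,0) if L < ℓ. Then the weak compositions β with 0 ≤ β ≤ α componentwise and |β| ≤ m satisfying e(m,α,β) < q^m are exactly β = α̂ and β = α̂^{(k)} for k = 1,…,L; moreover e(m,α,α̂) = 0 and e(m,α,α̂^{(k)}) = q^m − q^{A_k−1}. -/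
open Finset

/-- Partial sums: `psum f i = f 0 + f 1 + ⋯ + f (i-1)`. -/
def psum (f : ℕ → ℕ) (i : ℕ) : ℕ := ∑ j ∈ Finset.range i, f j

/-- The exponent `e(m,α,β) = Σᵢ (αᵢ − βᵢ)(q^m − q^{Bᵢ})`. -/
def eexp (q m ℓ : ℕ) (α β : ℕ → ℕ) : ℕ :=
  ∑ i ∈ Finset.range ℓ, (α i - β i) * (q ^ m - q ^ psum β (i + 1))

/-- The weak composition `α̂`: equal to `α` if `L = ℓ`, and to
`(α_0, …, α_{L-1}, m − A_L, 0, …, 0)` if `L < ℓ`. -/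
def alphaHat (m ℓ L : ℕ) (α : ℕ → ℕ) : ℕ → ℕ :=
  if L = ℓ then α
  else fun i => if i < L then α i else if i = L then m - psum α L else 0

/-- The weak composition `α̂⁽ᵏ⁾` (for `0 ≤ k < L`): obtained from `α` by decreasing the `k`-th
entry by one if `L = ℓ`, and equal to
`(α_0, …, α_{k-1}, α_k − 1, α_{k+1}, …, α_{L-1}, m − A_L + 1, 0, …, 0)` if `L < ℓ`. -/
def alphaHatK (m ℓ L : ℕ) (α : ℕ → ℕ) (k : ℕ) : ℕ → ℕ :=
  if L = ℓ then Function.update α k (α k - 1)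
  else fun i =>
    if i < L then (if i = k then α i - 1 else α i)
    else if i = L then m - psum α L + 1 else 0

lemma psum_succ (f : ℕ → ℕ) (i : ℕ) : psum f (i + 1) = psum f i + f i :=
  Finset.sum_range_succ f i

lemma psum_mono (f : ℕ → ℕ) {a b : ℕ} (h : a ≤ b) : psum f a ≤ psum f b :=
  Finset.sum_le_sum_of_subset (Finset.range_subset_range.2 h)

lemma psum_congr {f g : ℕ → ℕ} {j : ℕ} (h : ∀ i < j, f i = g i) : psum f j = psum g j :=
  Finset.sum_congr rfl fun i hi => h i (Finset.mem_range.1 hi)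

lemma eexp_congr (q m ℓ : ℕ) (α : ℕ → ℕ) {β β' : ℕ → ℕ} (h : ∀ i < ℓ, β i = β' i) :
    eexp q m ℓ α β = eexp q m ℓ α β' := by
  unfold eexp
  refine Finset.sum_congr rfl fun i hi => ?_
  rw [Finset.mem_range] at hi
  rw [h i hi, psum_congr (fun j hj => h j (by omega))]

lemma psum_alphaHat (m ℓ L : ℕ) (α : ℕ → ℕ) (hLl : L < ℓ) (hLA : psum α L ≤ m) (j : ℕ) :
    psum (alphaHat m ℓ L α) j = if j ≤ L then psum α j else m := by
  induction j with
  | zero => simp [psum]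
  | succ j ih =>
    rw [psum_succ, ih]
    have hent : alphaHat m ℓ L α j
        = if j < L then α j else if j = L then m - psum α L else 0 := by
      unfold alphaHat; rw [if_neg hLl.ne]
    rw [hent]
    rcases lt_trichotomy j L with h | h | h
    · rw [if_pos h, if_pos h.le, if_pos (by omega), ← psum_succ]
    · subst h
      rw [if_neg (by omega : ¬ j < j), if_pos rfl, if_pos le_rfl, if_neg (by omega)]
      omega
    · rw [if_neg (by omega), if_neg (by omega), if_neg (by omega), if_neg (by omega)]
      omega

lemma psum_update (α : ℕ → ℕ) (k : ℕ) (hαk : 1 ≤ α k) (j : ℕ) :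
    psum (Function.update α k (α k - 1)) j = if j ≤ k then psum α j else psum α j - 1 := by
  induction j with
  | zero => simp [psum]
  | succ j ih =>
    have h1 : 1 ≤ psum α (k + 1) := by rw [psum_succ]; omega
    rw [psum_succ, ih, Function.update_apply]
    rcases lt_trichotomy j k with h | h | h
    · rw [if_pos (by omega), if_neg (by omega), if_pos (by omega), ← psum_succ]
    · subst h
      rw [if_pos le_rfl, if_pos rfl, if_neg (by omega), psum_succ]
      omega
    · have h2 : psum α (k + 1) ≤ psum α j := psum_mono α (by omega)
      rw [if_neg (by omega), if_neg (by omega), if_neg (by omega), psum_succ]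
      omega

lemma psum_alphaHatK_lt (m ℓ L k : ℕ) (α : ℕ → ℕ) (hLl : L < ℓ) (hkL : k < L)
    (hαk : 1 ≤ α k) (hLA : psum α L ≤ m) (j : ℕ) :
    psum (alphaHatK m ℓ L α k) j =
      if j ≤ k then psum α j else if j ≤ L then psum α j - 1 else m := by
  have h1 : 1 ≤ psum α (k + 1) := by rw [psum_succ]; omega
  induction j with
  | zero => simp [psum]
  | succ j ih =>
    have hent : alphaHatK m ℓ L α k j
        = if j < L then (if j = k then α j - 1 else α j)
          else if j = L then m - psum α L + 1 else 0 := by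
      unfold alphaHatK; rw [if_neg hLl.ne]
    rw [psum_succ, ih, hent]
    rcases lt_trichotomy j k with h | h | h
    · rw [if_pos (by omega : j < L), if_neg (by omega : ¬ j = k), if_pos h.le,
        if_pos (by omega), ← psum_succ]
    · subst h
      rw [if_pos hkL, if_pos rfl, if_pos le_rfl, if_neg (by omega), if_pos (by omega),
        psum_succ]
      omega
    · rcases lt_trichotomy j L with h2 | h2 | h2
      · have h3 : psum α (k + 1) ≤ psum α j := psum_mono α (by omega)
        rw [if_pos h2, if_neg (by omega : ¬ j = k), if_neg (by omega), if_pos h2.le,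
          if_neg (by omega), if_pos (by omega), psum_succ]
        omega
      · subst h2
        have h3 : psum α (k + 1) ≤ psum α j := psum_mono α (by omega)
        rw [if_neg (by omega : ¬ j < j), if_pos rfl, if_neg (by omega), if_pos le_rfl,
          if_neg (by omega), if_neg (by omega)]
        omega
      · rw [if_neg (by omega), if_neg (by omega), if_neg (by omega), if_neg (by omega),
          if_neg (by omega), if_neg (by omega)]
        omega

lemma eexp_hat (q m ℓ L : ℕ) (α : ℕ → ℕ) (hLle : L ≤ ℓ) (hLA : psum α L ≤ m) :
    eexp q m ℓ α (alphaHat m ℓ L α) = 0 := by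
  unfold eexp
  apply Finset.sum_eq_zero
  intro i hi
  rw [Finset.mem_range] at hi
  by_cases hLℓ : L = ℓ
  · have h1 : alphaHat m ℓ L α i = α i := by unfold alphaHat; rw [if_pos hLℓ]
    rw [h1]; simp
  · have hLl : L < ℓ := lt_of_le_of_ne hLle hLℓ
    rcases lt_or_ge i L with h | h
    · have h1 : alphaHat m ℓ L α i = α i := by
        unfold alphaHat; rw [if_neg hLℓ]; simp [h]
      rw [h1]; simp
    · rw [psum_alphaHat m ℓ L α hLl hLA (i + 1), if_neg (by omega)]
      simp

lemma eexp_hatK (q m ℓ L k : ℕ) (α : ℕ → ℕ) (hpos : ∀ i < ℓ, 0 < α i)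
    (hLle : L ≤ ℓ) (hLA : psum α L ≤ m) (hkL : k < L) :
    eexp q m ℓ α (alphaHatK m ℓ L α k) = q ^ m - q ^ (psum α (k + 1) - 1) := by
  have hαk : 1 ≤ α k := hpos k (by omega)
  unfold eexp
  have hsum : (∑ i ∈ Finset.range ℓ,
        (α i - alphaHatK m ℓ L α k i) * (q ^ m - q ^ psum (alphaHatK m ℓ L α k) (i + 1)))
      = (α k - alphaHatK m ℓ L α k k) * (q ^ m - q ^ psum (alphaHatK m ℓ L α k) (k + 1)) := by
    apply Finset.sum_eq_single
    · intro i hi hik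
      rw [Finset.mem_range] at hi
      by_cases hLℓ : L = ℓ
      · have h1 : alphaHatK m ℓ L α k i = α i := by
          unfold alphaHatK; rw [if_pos hLℓ, Function.update_apply, if_neg hik]
        rw [h1]; simp
      · have hLl : L < ℓ := lt_of_le_of_ne hLle hLℓ
        rcases lt_or_ge i L with h | h
        · have h1 : alphaHatK m ℓ L α k i = α i := by
            unfold alphaHatK; rw [if_neg hLℓ]; simp [h, hik]
          rw [h1]; simp
        · rw [psum_alphaHatK_lt m ℓ L k α hLl hkL hαk hLA (i + 1), if_neg (by omega),
            if_neg (by omega)]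
          simp
    · intro h
      exact absurd (Finset.mem_range.2 (by omega : k < ℓ)) h
  rw [hsum]
  by_cases hLℓ : L = ℓ
  · have h1 : alphaHatK m ℓ L α k k = α k - 1 := by
      unfold alphaHatK; rw [if_pos hLℓ, Function.update_self]
    have h2 : psum (alphaHatK m ℓ L α k) (k + 1) = psum α (k + 1) - 1 := by
      have : alphaHatK m ℓ L α k = Function.update α k (α k - 1) := by
        unfold alphaHatK; rw [if_pos hLℓ]
      rw [this, psum_update α k hαk, if_neg (by omega)]
    rw [h1, h2, (by omega : α k - (α k - 1) = 1), one_mul]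
  · have hLl : L < ℓ := lt_of_le_of_ne hLle hLℓ
    have h1 : alphaHatK m ℓ L α k k = α k - 1 := by
      unfold alphaHatK; rw [if_neg hLℓ]; simp [hkL]
    have h2 : psum (alphaHatK m ℓ L α k) (k + 1) = psum α (k + 1) - 1 := by
      rw [psum_alphaHatK_lt m ℓ L k α hLl hkL hαk hLA (k + 1), if_neg (by omega),
        if_pos (by omega)]
    rw [h1, h2, (by omega : α k - (α k - 1) = 1), one_mul]

lemma sieve (q m ℓ : ℕ) (hq : 2 ≤ q) (α β : ℕ → ℕ)
    (hb : ∀ i < ℓ, β i ≤ α i) (hm : psum β ℓ ≤ m)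
    (he : eexp q m ℓ α β < q ^ m) :
    (∀ i < ℓ, β i < α i → psum β (i + 1) = m) ∨
      ∃ k < ℓ, β k + 1 = α k ∧ psum β (k + 1) < m ∧
        ∀ i < ℓ, i ≠ k → β i < α i → psum β (i + 1) = m := by
  unfold eexp at he
  by_cases h0 : ∀ i < ℓ, β i < α i → psum β (i + 1) = m
  · exact Or.inl h0
  push_neg at h0
  obtain ⟨k, hkℓ, hkβ, hkm⟩ := h0
  have hBk : psum β (k + 1) ≤ m := le_trans (psum_mono β (by omega)) hm
  have hBklt : psum β (k + 1) < m := lt_of_le_of_ne hBk hkm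
  have hm1 : 1 ≤ m := by omega
  have hq1 : q ^ (m - 1) * q = q ^ m := by
    rw [← pow_succ]; congr 1; omega
  have hq2 : q ^ (m - 1) * 2 ≤ q ^ m := by
    rw [← hq1]; exact Nat.mul_le_mul_left _ hq
  have hq3 : q ^ (m - 1) ≤ q ^ m := Nat.pow_le_pow_right (by omega) (by omega)
  have hbad : ∀ i < ℓ, β i < α i → psum β (i + 1) < m →
      q ^ m - q ^ (m - 1) ≤ (α i - β i) * (q ^ m - q ^ psum β (i + 1)) := by
    intro i hi h1 h2
    have hx : q ^ psum β (i + 1) ≤ q ^ (m - 1) := Nat.pow_le_pow_right (by omega) (by omega)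
    calc q ^ m - q ^ (m - 1) ≤ 1 * (q ^ m - q ^ psum β (i + 1)) := by omega
    _ ≤ (α i - β i) * (q ^ m - q ^ psum β (i + 1)) := Nat.mul_le_mul_right _ (by omega)
  right
  have hterm : (α k - β k) * (q ^ m - q ^ psum β (k + 1))
      ≤ ∑ i ∈ Finset.range ℓ, (α i - β i) * (q ^ m - q ^ psum β (i + 1)) :=
    Finset.single_le_sum (f := fun i => (α i - β i) * (q ^ m - q ^ psum β (i + 1)))
      (fun i _ => Nat.zero_le _) (Finset.mem_range.2 hkℓ)
  refine ⟨k, hkℓ, ?_, hBklt, ?_⟩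
  · by_contra hne
    have h2 : 2 ≤ α k - β k := by omega
    have hx : q ^ psum β (k + 1) ≤ q ^ (m - 1) := Nat.pow_le_pow_right (by omega) (by omega)
    have hbig : 2 * (q ^ m - q ^ (m - 1)) ≤ (α k - β k) * (q ^ m - q ^ psum β (k + 1)) :=
      calc 2 * (q ^ m - q ^ (m - 1)) ≤ (α k - β k) * (q ^ m - q ^ (m - 1)) :=
            Nat.mul_le_mul_right _ h2
      _ ≤ _ := Nat.mul_le_mul_left _ (by omega)
    omega
  · intro i hi hik h1
    by_contra hne
    have hBi : psum β (i + 1) < m := lt_of_le_of_ne (le_trans (psum_mono β (by omega)) hm) hne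
    have hsub : ({i, k} : Finset ℕ) ⊆ Finset.range ℓ := by
      intro x hx
      simp only [Finset.mem_insert, Finset.mem_singleton] at hx
      rcases hx with rfl | rfl <;> exact Finset.mem_range.2 (by omega)
    have hpair : (α i - β i) * (q ^ m - q ^ psum β (i + 1))
        + (α k - β k) * (q ^ m - q ^ psum β (k + 1))
        ≤ ∑ j ∈ Finset.range ℓ, (α j - β j) * (q ^ m - q ^ psum β (j + 1)) := by
      have h := Finset.sum_le_sum_of_subset
        (f := fun i => (α i - β i) * (q ^ m - q ^ psum β (i + 1))) hsub
      rw [Finset.sum_pair hik] at h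
      exact h
    have h1b := hbad i hi h1 hBi
    have h2b := hbad k hkℓ hkβ hBklt
    omega

lemma reconB (m ℓ L : ℕ) (α β : ℕ → ℕ) (hpos : ∀ i < ℓ, 0 < α i)
    (hLle : L ≤ ℓ) (hLA : psum α L ≤ m) (hLmax : L < ℓ → m < psum α (L + 1))
    (hb : ∀ i < ℓ, β i ≤ α i) (hm : psum β ℓ ≤ m)
    (h : ∀ i < ℓ, β i < α i → psum β (i + 1) = m) :
    ∀ i < ℓ, β i = alphaHat m ℓ L α i := by
  have hlt : ∀ i, i < L → β i = α i := by
    intro i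
    induction i using Nat.strong_induction_on with
    | _ i ih =>
      intro hiL
      have hps : psum β i = psum α i := psum_congr fun j hj => ih j hj (by omega)
      by_contra hne
      have hβα : β i < α i := lt_of_le_of_ne (hb i (by omega)) hne
      have hv := h i (by omega) hβα
      have e1 : psum β (i + 1) = psum β i + β i := psum_succ β i
      have e2 : psum α (i + 1) = psum α i + α i := psum_succ α i
      have e3 : psum α (i + 1) ≤ psum α L := psum_mono α (by omega)
      omega
  intro i hiℓ
  by_cases hLℓ : L = ℓ
  · have h1 : alphaHat m ℓ L α i = α i := by unfold alphaHat; rw [if_pos hLℓ]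
    rw [h1]; exact hlt i (by omega)
  · have hLl : L < ℓ := lt_of_le_of_ne hLle hLℓ
    have hent : alphaHat m ℓ L α i
        = if i < L then α i else if i = L then m - psum α L else 0 := by
      unfold alphaHat; rw [if_neg hLℓ]
    have hBL : psum β L = psum α L := psum_congr fun j hj => hlt j hj
    have hBL1 : psum β (L + 1) = psum β L + β L := psum_succ β L
    have hAL1 : psum α (L + 1) = psum α L + α L := psum_succ α L
    have hBL1m : psum β (L + 1) ≤ m := le_trans (psum_mono β (by omega)) hm
    have hmax := hLmax hLl
    have hβLα : β L < α L := by omega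
    have hvL := h L hLl hβLα
    have hβL : β L = m - psum α L := by omega
    rcases lt_trichotomy i L with h2 | h2 | h2
    · rw [hent, if_pos h2]; exact hlt i h2
    · subst h2; rw [hent, if_neg (by omega), if_pos rfl]; exact hβL
    · rw [hent, if_neg (by omega), if_neg (by omega)]
      have e1 : psum β (i + 1) = psum β i + β i := psum_succ β i
      have e2 : psum β (L + 1) ≤ psum β i := psum_mono β (by omega)
      have e3 : psum β (i + 1) ≤ m := le_trans (psum_mono β (by omega)) hm
      omega

lemma reconC (m ℓ L : ℕ) (α β : ℕ → ℕ) (hpos : ∀ i < ℓ, 0 < α i)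
    (hLle : L ≤ ℓ) (hLA : psum α L ≤ m) (hLmax : L < ℓ → m < psum α (L + 1))
    (hb : ∀ i < ℓ, β i ≤ α i) (hm : psum β ℓ ≤ m)
    (k : ℕ) (hkℓ : k < ℓ) (hk1 : β k + 1 = α k) (hkB : psum β (k + 1) < m)
    (h : ∀ i < ℓ, i ≠ k → β i < α i → psum β (i + 1) = m) :
    k < L ∧ ∀ i < ℓ, β i = alphaHatK m ℓ L α k i := by
  have hltk : ∀ i, i < k → β i = α i := by
    intro i
    induction i using Nat.strong_induction_on with
    | _ i ih =>
      intro hik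
      have hps : psum β i = psum α i := psum_congr fun j hj => ih j hj (by omega)
      by_contra hne
      have hβα : β i < α i := lt_of_le_of_ne (hb i (by omega)) hne
      have hv := h i (by omega) (by omega) hβα
      have e1 : psum β (i + 1) ≤ psum β (k + 1) := psum_mono β (by omega)
      omega
  have hBk : psum β k = psum α k := psum_congr fun j hj => hltk j hj
  have hBk1 : psum β (k + 1) + 1 = psum α (k + 1) := by
    have e1 : psum β (k + 1) = psum β k + β k := psum_succ β k
    have e2 : psum α (k + 1) = psum α k + α k := psum_succ α k
    omega
  have hkL : k < L := by
    by_contra hcon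
    have hLl : L < ℓ := by omega
    have := hLmax hLl
    have : psum α (L + 1) ≤ psum α (k + 1) := psum_mono α (by omega)
    omega
  have key : ∀ i, k + 1 ≤ i → i ≤ L → psum β i + 1 = psum α i := by
    intro i hki
    induction i, hki using Nat.le_induction with
    | base => intro _; exact hBk1
    | succ i hki ih =>
      intro hiL
      have h1 := ih (by omega)
      have hβi : β i = α i := by
        by_contra hne
        have hβα : β i < α i := lt_of_le_of_ne (hb i (by omega)) hne
        have hv := h i (by omega) (by omega) hβα
        have e2 : psum α (i + 1) = psum α i + α i := psum_succ α i
        have e3 : psum α (i + 1) ≤ psum α L := psum_mono α (by omega)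
        have e4 : psum β (i + 1) = psum β i + β i := psum_succ β i
        omega
      have e2 : psum α (i + 1) = psum α i + α i := psum_succ α i
      have e4 : psum β (i + 1) = psum β i + β i := psum_succ β i
      omega
  have hmid : ∀ i, k < i → i < L → β i = α i := by
    intro i h1 h2
    have a1 := key i (by omega) (by omega)
    have a2 := key (i + 1) (by omega) (by omega)
    have e2 : psum α (i + 1) = psum α i + α i := psum_succ α i
    have e4 : psum β (i + 1) = psum β i + β i := psum_succ β i
    omega
  refine ⟨hkL, ?_⟩
  intro i hiℓ
  by_cases hLℓ : L = ℓ
  · have h1 : alphaHatK m ℓ L α k i = if i = k then α k - 1 else α i := by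
      unfold alphaHatK; rw [if_pos hLℓ, Function.update_apply]
    rw [h1]
    rcases lt_trichotomy i k with h2 | h2 | h2
    · rw [if_neg (by omega)]; exact hltk i h2
    · subst h2; rw [if_pos rfl]; omega
    · rw [if_neg (by omega)]; exact hmid i h2 (by omega)
  · have hLl : L < ℓ := lt_of_le_of_ne hLle hLℓ
    have hent : alphaHatK m ℓ L α k i
        = if i < L then (if i = k then α i - 1 else α i)
          else if i = L then m - psum α L + 1 else 0 := by
      unfold alphaHatK; rw [if_neg hLℓ]
    have hmax := hLmax hLl
    have hBL : psum β L + 1 = psum α L := key L (by omega) le_rfl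
    have hBL1 : psum β (L + 1) = psum β L + β L := psum_succ β L
    have hAL1 : psum α (L + 1) = psum α L + α L := psum_succ α L
    have hBL1m : psum β (L + 1) ≤ m := le_trans (psum_mono β (by omega)) hm
    have hβLm : psum β (L + 1) = m := by
      by_cases hc : β L < α L
      · exact h L hLl (by omega) hc
      · have : β L = α L := le_antisymm (hb L hLl) (by omega)
        omega
    have hβL : β L = m - psum α L + 1 := by omega
    rcases lt_trichotomy i L with h2 | h2 | h2
    · rw [hent, if_pos h2]
      rcases lt_trichotomy i k with h3 | h3 | h3
      · rw [if_neg (by omega)]; exact hltk i h3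
      · subst h3; rw [if_pos rfl]; omega
      · rw [if_neg (by omega)]; exact hmid i h3 h2
    · subst h2; rw [hent, if_neg (by omega), if_pos rfl]; exact hβL
    · rw [hent, if_neg (by omega), if_neg (by omega)]
      have e1 : psum β (i + 1) = psum β i + β i := psum_succ β i
      have e2 : psum β (L + 1) ≤ psum β i := psum_mono β (by omega)
      have e3 : psum β (i + 1) ≤ m := le_trans (psum_mono β (by omega)) hm
      omega

/-- Lemma (vanishing t-power lemma): for a prime power `q`, `m ≥ 0`, a composition
`α = (α_0,…,α_{ℓ-1})` of `n`, and `L` the largest index with `A_L ≤ m`, the weak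
compositions `β ≤ α` with `|β| ≤ m` and `e(m,α,β) < q^m` are exactly `α̂` and the
`α̂⁽ᵏ⁾` for `0 ≤ k < L`; moreover `e(m,α,α̂) = 0` and `e(m,α,α̂⁽ᵏ⁾) = q^m − q^{A_{k+1} − 1}`. -/
theorem statement1 (q m ℓ n : ℕ) (hq : IsPrimePow q) (α : ℕ → ℕ)
    (hpos : ∀ i < ℓ, 0 < α i) (hsum : ∑ i ∈ Finset.range ℓ, α i = n)
    (L : ℕ) (hLle : L ≤ ℓ) (hLA : psum α L ≤ m)
    (hLmax : L < ℓ → m < psum α (L + 1)) :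
    (∀ β : ℕ → ℕ, (∀ i < ℓ, β i ≤ α i) → psum β ℓ ≤ m →
      (eexp q m ℓ α β < q ^ m ↔
        ((∀ i < ℓ, β i = alphaHat m ℓ L α i) ∨
          ∃ k < L, ∀ i < ℓ, β i = alphaHatK m ℓ L α k i))) ∧
    eexp q m ℓ α (alphaHat m ℓ L α) = 0 ∧
    (∀ k < L, eexp q m ℓ α (alphaHatK m ℓ L α k) = q ^ m - q ^ (psum α (k + 1) - 1)) := by
  have hq2 : 2 ≤ q := hq.two_le
  refine ⟨?_, eexp_hat q m ℓ L α hLle hLA,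
    fun k hk => eexp_hatK q m ℓ L k α hpos hLle hLA hk⟩
  intro β hb hm
  constructor
  · intro he
    rcases sieve q m ℓ hq2 α β hb hm he with h | ⟨k, hkℓ, hk1, hkB, h⟩
    · exact Or.inl (reconB m ℓ L α β hpos hLle hLA hLmax hb hm h)
    · obtain ⟨hkL, hβ⟩ := reconC m ℓ L α β hpos hLle hLA hLmax hb hm k hkℓ hk1 hkB h
      exact Or.inr ⟨k, hkL, hβ⟩
  · rintro (h | ⟨k, hkL, h⟩)
    · rw [eexp_congr q m ℓ α h, eexp_hat q m ℓ L α hLle hLA]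
      exact Nat.pow_pos (by omega)
    · rw [eexp_congr q m ℓ α h, eexp_hatK q m ℓ L k α hpos hLle hLA hkL]
      exact Nat.sub_lt (Nat.pow_pos (by omega)) (Nat.pow_pos (by omega))
end

section
/- The image of the monomial (x_1 x_2 ⋯ x_n)^{q^m−1} in Q = S/(x_1^{q^m},…,x_n^{q^m}) is fixed by every element of GL_n(F_q); equivalently, for every g ∈ GL_n(F_q), the polynomial g((x_1⋯x_n)^{q^m−1}) − (x_1⋯x_n)^{q^m−1} lies in the ideal (x_1^{q^m},…,x_n^{q^m}) of F_q[x_1,…,x_n]. -/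
open Matrix MvPolynomial

noncomputable def lsub {n : ℕ} {Fq : Type} [Field Fq] (g : Matrix (Fin n) (Fin n) Fq) :
    MvPolynomial (Fin n) Fq →ₐ[Fq] MvPolynomial (Fin n) Fq :=
  MvPolynomial.aeval fun i => ∑ j, MvPolynomial.C (g i j) * MvPolynomial.X j

section Aux

variable {n : ℕ} {Fq : Type} [Field Fq]

lemma lsub_X (M : Matrix (Fin n) (Fin n) Fq) (k : Fin n) :
    lsub M (X k) = ∑ j, C (M k j) * X j := by
  simp [lsub]

lemma lsub_mul (M N : Matrix (Fin n) (Fin n) Fq) (p : MvPolynomial (Fin n) Fq) :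
    lsub (M * N) p = lsub N (lsub M p) := by
  have lsubC : ∀ (P : Matrix (Fin n) (Fin n) Fq) (a : Fq), lsub P (C a) = C a := by
    intro P a; simp [lsub, algebraMap_eq]
  have h : (lsub N).comp (lsub M) = lsub (M * N) := by
    apply MvPolynomial.algHom_ext
    intro i
    simp only [AlgHom.comp_apply, lsub_X, map_sum, _root_.map_mul, lsubC, Matrix.mul_apply,
      Finset.sum_mul, Finset.mul_sum, map_sum, mul_assoc]
    rw [Finset.sum_comm]
  rw [← h]; rfl

lemma lsub_one (p : MvPolynomial (Fin n) Fq) : lsub (1 : Matrix (Fin n) (Fin n) Fq) p = p := by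
  have h : lsub (1 : Matrix (Fin n) (Fin n) Fq) = AlgHom.id Fq _ := by
    apply MvPolynomial.algHom_ext
    intro i
    simp [lsub_X, Matrix.one_apply]
  rw [h]; rfl

variable [Fintype Fq]

lemma sum_pow_Q {q : ℕ} (hcard : Fintype.card Fq = q) (m : ℕ) {ι : Type*} (s : Finset ι)
    (f : ι → MvPolynomial (Fin n) Fq) :
    (∑ i ∈ s, f i) ^ q ^ m = ∑ i ∈ s, f i ^ q ^ m := by
  set p := ringChar Fq with hp
  haveI : Fact p.Prime := ⟨CharP.char_is_prime Fq p⟩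
  obtain ⟨s', -, hq⟩ := FiniteField.card Fq p
  rw [hcard] at hq
  rw [hq, ← pow_mul]
  exact sum_pow_char_pow p _ s f

lemma lsub_mem {q m : ℕ} (hcard : Fintype.card Fq = q) (M : Matrix (Fin n) (Fin n) Fq)
    {f : MvPolynomial (Fin n) Fq}
    (hf : f ∈ Ideal.span (Set.range fun i : Fin n => (X i : MvPolynomial (Fin n) Fq) ^ q ^ m)) :
    lsub M f ∈ Ideal.span (Set.range fun i : Fin n => (X i : MvPolynomial (Fin n) Fq) ^ q ^ m) := by
  set I := Ideal.span (Set.range fun i : Fin n => (X i : MvPolynomial (Fin n) Fq) ^ q ^ m) with hI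
  have h : I ≤ Ideal.comap (lsub M : MvPolynomial (Fin n) Fq →+* MvPolynomial (Fin n) Fq) I := by
    rw [hI, Ideal.span_le]
    rintro _ ⟨i, rfl⟩
    simp only [Ideal.mem_comap, SetLike.mem_coe, RingHom.coe_coe]
    rw [map_pow, lsub_X, sum_pow_Q hcard]
    refine Ideal.sum_mem _ fun j _ => ?_
    rw [mul_pow]
    exact Ideal.mul_mem_left _ _ (Ideal.subset_span ⟨j, rfl⟩)
  exact h hf

lemma lsub_e_transvection {q m : ℕ} (hcard : Fintype.card Fq = q)
    (t : TransvectionStruct (Fin n) Fq) :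
    lsub t.toMatrix ((∏ i : Fin n, X i) ^ (q ^ m - 1)) - (∏ i : Fin n, X i) ^ (q ^ m - 1)
      ∈ Ideal.span (Set.range fun i : Fin n => (X i : MvPolynomial (Fin n) Fq) ^ q ^ m) := by
  have hQ : 1 ≤ q ^ m := Nat.one_le_pow _ _ (by rw [← hcard]; exact Fintype.card_pos)
  have hk : ∀ k, lsub t.toMatrix (X k) =
      if k = t.i then X t.i + C t.c * X t.j else (X k : MvPolynomial (Fin n) Fq) := by
    intro k
    rw [lsub_X]
    by_cases h : k = t.i
    · subst h
      simp [TransvectionStruct.toMatrix, Matrix.transvection, Matrix.add_apply, Matrix.one_apply,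
        Matrix.single, _root_.map_add, add_mul, Finset.sum_add_distrib, apply_ite C,
        ite_mul, Finset.sum_ite_eq, Finset.sum_ite_eq']
    · have h' : t.i ≠ k := fun hh => h hh.symm
      simp [TransvectionStruct.toMatrix, Matrix.transvection, Matrix.add_apply, Matrix.one_apply,
        Matrix.single, h, h', _root_.map_add, add_mul, Finset.sum_add_distrib,
        apply_ite C, ite_mul, Finset.sum_ite_eq, Finset.sum_ite_eq']
  have hprod : lsub t.toMatrix (∏ i : Fin n, X i) =
      (X t.i + C t.c * X t.j) * ∏ k ∈ {t.i}ᶜ, (X k : MvPolynomial (Fin n) Fq) := by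
    rw [map_prod]
    rw [Fintype.prod_eq_mul_prod_compl t.i]
    congr 1
    · rw [hk]; simp
    · exact Finset.prod_congr rfl fun k hkk => by
        rw [hk]; simp only [Finset.mem_compl, Finset.mem_singleton] at hkk; simp [hkk]
  have he : (∏ i : Fin n, X i) = X t.i * ∏ k ∈ {t.i}ᶜ, (X k : MvPolynomial (Fin n) Fq) :=
    Fintype.prod_eq_mul_prod_compl t.i _
  rw [map_pow, hprod]
  set P : MvPolynomial (Fin n) Fq := ∏ k ∈ {t.i}ᶜ, X k with hP
  have key : ((X t.i + C t.c * X t.j) * P) ^ (q ^ m - 1) - (∏ i : Fin n, X i) ^ (q ^ m - 1)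
      = ((X t.i + C t.c * X t.j) ^ (q ^ m - 1) - (X t.i : MvPolynomial (Fin n) Fq) ^ (q ^ m - 1))
        * P ^ (q ^ m - 1) := by
    rw [he, mul_pow, mul_pow, sub_mul]
  rw [key]
  have h1 : (X t.j : MvPolynomial (Fin n) Fq) ∣
      (X t.i + C t.c * X t.j) ^ (q ^ m - 1) - (X t.i : MvPolynomial (Fin n) Fq) ^ (q ^ m - 1) := by
    refine dvd_trans (dvd_mul_left (X t.j) (C t.c)) ?_
    have := sub_dvd_pow_sub_pow (X t.i + C t.c * X t.j) (X t.i : MvPolynomial (Fin n) Fq)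
      (q ^ m - 1)
    rwa [add_sub_cancel_left] at this
  have h2 : (X t.j : MvPolynomial (Fin n) Fq) ^ (q ^ m - 1) ∣ P ^ (q ^ m - 1) := by
    apply pow_dvd_pow_of_dvd
    exact Finset.dvd_prod_of_mem _ (by simp [t.hij.symm, Ne.symm t.hij])
  have h3 : (X t.j : MvPolynomial (Fin n) Fq) ^ (q ^ m) ∣
      ((X t.i + C t.c * X t.j) ^ (q ^ m - 1) - (X t.i : MvPolynomial (Fin n) Fq) ^ (q ^ m - 1))
        * P ^ (q ^ m - 1) := by
    have := mul_dvd_mul h1 h2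
    have hpow : (X t.j : MvPolynomial (Fin n) Fq) * X t.j ^ (q ^ m - 1) = X t.j ^ (q ^ m) := by
      rw [← pow_succ']
      congr 1
      omega
    rwa [hpow] at this
  obtain ⟨r, hr⟩ := h3
  rw [hr]
  exact Ideal.mul_mem_right r _ (Ideal.subset_span ⟨t.j, rfl⟩)

lemma lsub_e_diag {q m : ℕ} (hcard : Fintype.card Fq = q) (D : Fin n → Fq)
    (hD : ∏ i, D i ≠ 0) :
    lsub (Matrix.diagonal D) ((∏ i : Fin n, X i) ^ (q ^ m - 1))
      = (∏ i : Fin n, X i) ^ (q ^ m - 1) := by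
  have hk : ∀ k, lsub (Matrix.diagonal D) (X k) = C (D k) * (X k : MvPolynomial (Fin n) Fq) := by
    intro k
    rw [lsub_X]
    simp [Matrix.diagonal_apply, apply_ite C, ite_mul, Finset.sum_ite_eq, Finset.sum_ite_eq']
  have hu : (∏ i, D i) ^ (q ^ m - 1) = 1 := by
    have h1 : (∏ i, D i) ^ (q - 1) = 1 := by
      rw [← hcard]
      exact FiniteField.pow_card_sub_one_eq_one _ hD
    obtain ⟨t, ht⟩ : q - 1 ∣ q ^ m - 1 := by
      have := Nat.sub_dvd_pow_sub_pow q 1 m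
      rwa [one_pow] at this
    rw [ht, pow_mul, h1, one_pow]
  rw [map_pow, map_prod]
  have : (∏ i : Fin n, lsub (Matrix.diagonal D) (X i))
      = C (∏ i, D i) * ∏ i : Fin n, (X i : MvPolynomial (Fin n) Fq) := by
    have hC : (C (∏ i, D i) : MvPolynomial (Fin n) Fq) = ∏ i, C (D i) := map_prod C _ _
    rw [hC, ← Finset.prod_mul_distrib]
    exact Finset.prod_congr rfl fun k _ => hk k
  rw [this, mul_pow, ← C_pow, hu, C_1, one_mul]

lemma lsub_e_list {q m : ℕ} (hcard : Fintype.card Fq = q)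
    (L : List (TransvectionStruct (Fin n) Fq)) :
    lsub (L.map TransvectionStruct.toMatrix).prod ((∏ i : Fin n, X i) ^ (q ^ m - 1))
        - (∏ i : Fin n, X i) ^ (q ^ m - 1)
      ∈ Ideal.span (Set.range fun i : Fin n => (X i : MvPolynomial (Fin n) Fq) ^ q ^ m) := by
  induction L with
  | nil => simp [lsub_one]
  | cons t L ih =>
      rw [List.map_cons, List.prod_cons, lsub_mul]
      set e : MvPolynomial (Fin n) Fq := (∏ i : Fin n, X i) ^ (q ^ m - 1) with he
      set PL := (L.map TransvectionStruct.toMatrix).prod with hPL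
      have heq : lsub PL (lsub t.toMatrix e) - e
          = lsub PL (lsub t.toMatrix e - e) + (lsub PL e - e) := by
        rw [map_sub]; ring
      rw [heq]
      exact add_mem (lsub_mem hcard _ (lsub_e_transvection hcard t)) ih

end Aux

/-- Proposition: for every `g ∈ GL_n(F_q)`, the polynomial
`g((x_1⋯x_n)^{q^m−1}) − (x_1⋯x_n)^{q^m−1}` lies in the ideal `(x_1^{q^m},…,x_n^{q^m})`;
i.e. the image of `(x_1⋯x_n)^{q^m−1}` in `Q = S/𝔪^{[q^m]}` is `GL_n(F_q)`-invariant. -/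
theorem statement2 (q m n : ℕ) (Fq : Type) [Field Fq] [Fintype Fq]
    (hcard : Fintype.card Fq = q) (g : GL (Fin n) Fq) :
    lsub (g : Matrix (Fin n) (Fin n) Fq) ((∏ i : Fin n, MvPolynomial.X i) ^ (q ^ m - 1)) -
        (∏ i : Fin n, MvPolynomial.X i) ^ (q ^ m - 1)
      ∈ Ideal.span
          (Set.range fun i : Fin n =>
            (MvPolynomial.X i : MvPolynomial (Fin n) Fq) ^ q ^ m) := by
  classical
  set e : MvPolynomial (Fin n) Fq := (∏ i : Fin n, X i) ^ (q ^ m - 1) with he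
  obtain ⟨L, L', D, hM⟩ :=
    Matrix.Pivot.exists_list_transvec_mul_diagonal_mul_list_transvec (g : Matrix (Fin n) (Fin n) Fq)
  have hdet : (∏ i, D i) ≠ 0 := by
    have hu : IsUnit (g : Matrix (Fin n) (Fin n) Fq).det := by
      have : IsUnit (g : Matrix (Fin n) (Fin n) Fq) := ⟨g, rfl⟩
      exact (Matrix.isUnit_iff_isUnit_det _).mp this
    have : (g : Matrix (Fin n) (Fin n) Fq).det = ∏ i, D i := by
      rw [hM, Matrix.det_mul, Matrix.det_mul, Matrix.TransvectionStruct.det_toMatrix_prod,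
        Matrix.TransvectionStruct.det_toMatrix_prod, Matrix.det_diagonal, one_mul, mul_one]
    rw [this] at hu
    exact hu.ne_zero
  rw [hM, lsub_mul, lsub_mul]
  have h1 := lsub_e_list (q := q) (m := m) hcard L
  have h2 : lsub (Matrix.diagonal D) (lsub (L.map TransvectionStruct.toMatrix).prod e) - e
      ∈ Ideal.span (Set.range fun i : Fin n => (X i : MvPolynomial (Fin n) Fq) ^ q ^ m) := by
    have heq : lsub (Matrix.diagonal D) (lsub (L.map TransvectionStruct.toMatrix).prod e) - e
        = lsub (Matrix.diagonal D) (lsub (L.map TransvectionStruct.toMatrix).prod e - e)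
          + (lsub (Matrix.diagonal D) e - e) := by
      rw [map_sub]; ring
    rw [heq, lsub_e_diag hcard D hdet, sub_self, add_zero]
    exact lsub_mem hcard _ h1
  have heq : lsub (L'.map TransvectionStruct.toMatrix).prod
        (lsub (Matrix.diagonal D) (lsub (L.map TransvectionStruct.toMatrix).prod e)) - e
      = lsub (L'.map TransvectionStruct.toMatrix).prod
          (lsub (Matrix.diagonal D) (lsub (L.map TransvectionStruct.toMatrix).prod e) - e)
        + (lsub (L'.map TransvectionStruct.toMatrix).prod e - e) := by
    rw [map_sub]; ring
  rw [heq]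
  exact add_mem (lsub_mem hcard _ h2) (lsub_e_list hcard L')
end

section
/- Let S be an integral domain and G a finite group of ring automorphisms of S, with invariant subring R := S^G and K := Frac(R) the fraction field of R. Let N be the additive subgroup of S generated by {g(s) − s : g ∈ G, s ∈ S}; then N is an R-submodule of S, and the cofixed space S_G := S/N satisfies dim_K (K ⊗_R S_G) = 1; that is, S_G has rank one as an R-module. -/
set_option synthInstance.maxHeartbeats 1000000
set_option maxHeartbeats 2000000

/-- The subring of `G`-fixed elements of `S`, for `G` a group of ring automorphisms of `S`. -/
def fixedSubring (S : Type*) [CommRing S] (G : Subgroup (RingAut S)) : Subring S where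
  carrier := {s | ∀ g ∈ G, g s = s}
  zero_mem' := fun g _ => map_zero g
  one_mem' := fun g _ => map_one g
  add_mem' := by
    intro a b ha hb g hg
    rw [map_add, ha g hg, hb g hg]
  mul_mem' := by
    intro a b ha hb g hg
    rw [map_mul, ha g hg, hb g hg]
  neg_mem' := by
    intro a ha g hg
    rw [map_neg, ha g hg]

section aux

set_option linter.unusedSectionVars false

variable {S : Type*} [CommRing S] [IsDomain S] (G : Subgroup (RingAut S)) [Fintype G]

/-- The trace (sum over the group) of an element is `G`-fixed. -/
lemma tr_mem (s : S) : (∑ g : G, (g : RingAut S) s) ∈ fixedSubring S G := by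
  intro h hG
  rw [map_sum]
  exact Fintype.sum_equiv (Equiv.mulLeft (⟨h, hG⟩ : G)) _ _ (fun g => rfl)

lemma tr_apply (s : S) (h : RingAut S) (hG : h ∈ G) :
    (∑ g : G, (g : RingAut S) (h s)) = ∑ g : G, (g : RingAut S) s :=
  Fintype.sum_equiv (Equiv.mulRight (⟨h, hG⟩ : G)) (fun g => (g : RingAut S) (h s))
    (fun g => (g : RingAut S) s) (fun _ => rfl)

lemma tr_mul (r : fixedSubring S G) (s : S) :
    (∑ g : G, (g : RingAut S) ((r : S) * s)) = (r : S) * ∑ g : G, (g : RingAut S) s := by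
  rw [Finset.mul_sum]
  refine Finset.sum_congr rfl fun g _ => ?_
  rw [map_mul, r.2 g.1 g.2]

lemma key_mem (s t : S) :
    (∑ g : G, (g : RingAut S) s) * t - s * (∑ g : G, (g : RingAut S) t) ∈
      Submodule.span (fixedSubring S G) {x : S | ∃ g ∈ G, ∃ s : S, x = g s - s} := by
  have h2 : (∑ g : G, ((g⁻¹ : G) : RingAut S) t) = ∑ g : G, (g : RingAut S) t :=
    Equiv.sum_comp (Equiv.inv G) (fun h : G => (h : RingAut S) t)
  have h1 : (∑ g : G, (g : RingAut S) s) * t - s * (∑ g : G, (g : RingAut S) t)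
      = ∑ g : G, ((g : RingAut S) (s * ((g⁻¹ : G) : RingAut S) t)
          - s * ((g⁻¹ : G) : RingAut S) t) := by
    rw [Finset.sum_sub_distrib]
    congr 1
    · rw [Finset.sum_mul]
      refine Finset.sum_congr rfl fun g _ => ?_
      rw [map_mul]
      exact (congrArg ((g : RingAut S) s * ·) ((g : RingAut S).apply_symm_apply t)).symm
    · rw [← h2, Finset.mul_sum]
  rw [h1]
  exact Submodule.sum_mem _ fun g _ => Submodule.subset_span ⟨g.1, g.2, _, rfl⟩

/-- There is an element with nonzero trace (Dedekind independence of characters). -/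
lemma tr_exists_ne_zero : ∃ s : S, (∑ g : G, (g : RingAut S) s) ≠ 0 := by
  by_contra h
  push_neg at h
  have hinj : Function.Injective
      (fun g : G => ((g : RingAut S) : S →* S)) := by
    intro g₁ g₂ hgg
    ext1
    exact RingEquiv.ext fun s => DFunLike.congr_fun hgg s
  have li : LinearIndependent S
      (fun g : G => (((g : RingAut S) : S →* S) : S → S)) :=
    (linearIndependent_monoidHom S S).comp _ hinj
  have hz : (∑ g : G, (1 : S) • (((g : RingAut S) : S →* S) : S → S)) = 0 := by
    funext s
    simpa [Finset.sum_apply] using h s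
  have := Fintype.linearIndependent_iff.mp li (fun _ => 1) hz 1
  exact one_ne_zero this

end aux

/-- Let `S` be an integral domain and `G` a finite group of ring automorphisms of `S`, with
invariant subring `R = S^G` and `K = Frac(R)`.  Then the additive subgroup `N` generated by
`{g(s) − s : g ∈ G, s ∈ S}` is an `R`-submodule of `S`, and the cofixed space `S_G = S/N`
satisfies `dim_K (K ⊗_R S_G) = 1`, i.e. it has rank one as an `R`-module. -/
theorem statement8 (S : Type*) [CommRing S] [IsDomain S]
    (G : Subgroup (RingAut S)) [Finite G] :
    (∀ r : S, (∀ g ∈ G, g r = r) →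
      ∀ x ∈ AddSubgroup.closure {x : S | ∃ g ∈ G, ∃ s : S, x = g s - s},
        r * x ∈ AddSubgroup.closure {x : S | ∃ g ∈ G, ∃ s : S, x = g s - s}) ∧
    Module.rank (FractionRing (fixedSubring S G))
        (TensorProduct (fixedSubring S G) (FractionRing (fixedSubring S G))
          (S ⧸ Submodule.span (fixedSubring S G) {x : S | ∃ g ∈ G, ∃ s : S, x = g s - s}))
      = 1 := by
  classical
  haveI : Fintype G := Fintype.ofFinite G
  constructor
  · intro r hr x hx
    induction hx using AddSubgroup.closure_induction with
    | mem y hy =>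
      obtain ⟨g, hg, s, rfl⟩ := hy
      refine AddSubgroup.subset_closure ⟨g, hg, r * s, ?_⟩
      rw [map_mul, hr g hg]
      ring
    | zero => rw [mul_zero]; exact AddSubgroup.zero_mem _
    | add a b _ _ ha hb => rw [mul_add]; exact AddSubgroup.add_mem _ ha hb
    | neg a _ ha => rw [mul_neg]; exact AddSubgroup.neg_mem _ ha
  · obtain ⟨s₀, hs₀⟩ := tr_exists_ne_zero G
    set Rr := fixedSubring S G with hRr
    set K := FractionRing Rr with hK
    set N : Submodule Rr S :=
      Submodule.span Rr {x : S | ∃ g ∈ G, ∃ s : S, x = g s - s} with hNdef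
    -- the trace as an `Rr`-linear map `S →ₗ Rr`
    have smul_def : ∀ (r : Rr) (s : S), r • s = (r : S) * s := fun r s => rfl
    let tr : S →ₗ[Rr] Rr :=
      { toFun := fun s => ⟨∑ g : G, (g : RingAut S) s, tr_mem G s⟩
        map_add' := fun s t => Subtype.ext (by
          simp [map_add, Finset.sum_add_distrib])
        map_smul' := fun r s => Subtype.ext (by
          simp only [RingHom.id_apply]
          rw [smul_def]
          exact tr_mul G r s) }
    have trN : N ≤ LinearMap.ker ((Algebra.linearMap Rr K).comp tr) := by
      rw [hNdef, Submodule.span_le]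
      rintro x ⟨g, hg, s, rfl⟩
      simp only [SetLike.mem_coe, LinearMap.mem_ker, LinearMap.comp_apply]
      have h0 : tr (g s - s) = 0 := Subtype.ext (by
        simp [tr, map_sub, Finset.sum_sub_distrib, tr_apply G s g hg])
      rw [h0, map_zero]
    let T : (S ⧸ N) →ₗ[Rr] K := Submodule.liftQ N _ trN
    let B : K →ₗ[Rr] (S ⧸ N) →ₗ[Rr] K :=
      LinearMap.mk₂ Rr (fun k m => k * T m)
        (fun k₁ k₂ m => add_mul _ _ _)
        (fun r k m => smul_mul_assoc r k (T m))
        (fun k m₁ m₂ => by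
          show k * T (m₁ + m₂) = k * T m₁ + k * T m₂
          rw [map_add, mul_add])
        (fun r k m => by
          show k * T (r • m) = r • (k * T m)
          rw [map_smul, mul_smul_comm])
    let ψ : TensorProduct Rr K (S ⧸ N) →ₗ[Rr] K := TensorProduct.lift B
    set trR₀ : Rr := ⟨∑ g : G, (g : RingAut S) s₀, tr_mem G s₀⟩ with htrR₀
    have htrR₀ne : trR₀ ≠ 0 := fun h => hs₀ (congrArg Subtype.val h)
    set u : K := algebraMap Rr K trR₀ with hu
    have hune : u ≠ 0 := by
      rw [hu]
      exact fun h => htrR₀ne (IsFractionRing.injective Rr K (by rw [h, map_zero]))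
    set w : TensorProduct Rr K (S ⧸ N) :=
      (1 : K) ⊗ₜ[Rr] (Submodule.Quotient.mk s₀) with hw
    have hψw : ψ w = u := by
      rw [hw]
      show (1 : K) * T (Submodule.Quotient.mk s₀) = u
      rw [one_mul]
      rfl
    have hwne : w ≠ 0 := by
      intro h
      rw [h, map_zero] at hψw
      exact hune hψw.symm
    -- every element is a multiple of `w`
    have hspan : ∀ v : TensorProduct Rr K (S ⧸ N), ∃ c : K, c • w = v := by
      intro v
      induction v with
      | zero => exact ⟨0, zero_smul _ _⟩
      | tmul k m =>
        obtain ⟨s, rfl⟩ := Submodule.Quotient.mk_surjective N m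
        set trs : Rr := ⟨∑ g : G, (g : RingAut S) s, tr_mem G s⟩ with htrs
        have hrel : (trR₀ • (Submodule.Quotient.mk s : S ⧸ N))
            = trs • (Submodule.Quotient.mk s₀ : S ⧸ N) := by
          rw [← Submodule.Quotient.mk_smul, ← Submodule.Quotient.mk_smul,
            Submodule.Quotient.eq]
          rw [smul_def, smul_def]
          have := key_mem G s₀ s
          rw [mul_comm s₀] at this
          exact this
        have hkw : k • w = k ⊗ₜ[Rr] (Submodule.Quotient.mk s₀ : S ⧸ N) := by
          rw [hw, TensorProduct.smul_tmul', smul_eq_mul, mul_one]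
        have step : u • (k ⊗ₜ[Rr] (Submodule.Quotient.mk s : S ⧸ N))
            = (algebraMap Rr K trs * k) • w := by
          rw [hu, mul_smul, hkw, algebraMap_smul, algebraMap_smul,
            ← TensorProduct.tmul_smul, ← TensorProduct.tmul_smul, hrel]
        refine ⟨u⁻¹ * (algebraMap Rr K trs * k), ?_⟩
        rw [mul_smul, ← step, ← mul_smul, inv_mul_cancel₀ hune, one_smul]
      | add x y hx hy =>
        obtain ⟨c₁, hc₁⟩ := hx
        obtain ⟨c₂, hc₂⟩ := hy
        exact ⟨c₁ + c₂, by rw [add_smul, hc₁, hc₂]⟩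
    exact rank_eq_one w hwne hspan
end

section
/- Let q be a prime power and m, n ≥ 1, with GL_n(F_q) acting on F_{q^m}^n via the inclusion GL_n(F_q) ⊆ GL_n(F_{q^m}). The map v ↦ span_{F_q}{v_1,…,v_n} induces a bijection from the set of GL_n(F_q)-orbits on F_{q^m}^n onto the set of F_q-subspaces of F_{q^m} of F_q-dimension at most min(n,m). Consequently, the number of GL_n(F_q)-orbits on F_{q^m}^n equals Σ_{k=0}^{min(n,m)} [m choose k]_q, where [m choose k]_q = ∏_{i=0}^{k−1}(q^m−q^i)/(q^k−q^i) is the number of k-dimensional F_q-subspaces of an m-dimensional F_q-vector space. -/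
open Finset Matrix

/-- The action of `g ∈ GL_n(F_q)` on `F_{q^m}^n`: `(g·v)_r = Σ_s g_{rs} v_s`. -/
noncomputable def actGL (Fq Fqm : Type) [Field Fq] [Field Fqm] [Algebra Fq Fqm] {n : ℕ}
    (g : GL (Fin n) Fq) (v : Fin n → Fqm) : Fin n → Fqm :=
  fun r => ∑ s, algebraMap Fq Fqm ((g : Matrix (Fin n) (Fin n) Fq) r s) * v s

/-- Two linear maps from a finite-dimensional space with equal range differ by an automorphism. -/
lemma exists_comp_eq {K V W : Type*} [Field K] [AddCommGroup V] [Module K V]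
    [AddCommGroup W] [Module K W] [FiniteDimensional K V] (f g : V →ₗ[K] W)
    (h : LinearMap.range f = LinearMap.range g) :
    ∃ e : V ≃ₗ[K] V, ∀ x, f (e x) = g x := by
  obtain ⟨Cf, hf⟩ := Submodule.exists_isCompl (LinearMap.ker f)
  obtain ⟨Cg, hg⟩ := Submodule.exists_isCompl (LinearMap.ker g)
  have hrank : Module.finrank K (LinearMap.ker g) = Module.finrank K (LinearMap.ker f) := by
    have h1 := LinearMap.finrank_range_add_finrank_ker f
    have h2 := LinearMap.finrank_range_add_finrank_ker g
    rw [h] at h1; omega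
  let eK : LinearMap.ker g ≃ₗ[K] LinearMap.ker f := LinearEquiv.ofFinrankEq _ _ hrank
  let ψf : Cf ≃ₗ[K] LinearMap.range f :=
    (Submodule.quotientEquivOfIsCompl _ _ hf).symm.trans f.quotKerEquivRange
  let ψg : Cg ≃ₗ[K] LinearMap.range g :=
    (Submodule.quotientEquivOfIsCompl _ _ hg).symm.trans g.quotKerEquivRange
  have hψf : ∀ c : Cf, (ψf c : W) = f c := fun c => by
    simp [ψf, LinearMap.quotKerEquivRange_apply_mk]
  have hψg : ∀ c : Cg, (ψg c : W) = g c := fun c => by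
    simp [ψg, LinearMap.quotKerEquivRange_apply_mk]
  let eC : Cg ≃ₗ[K] Cf := ψg.trans ((LinearEquiv.ofEq _ _ h.symm).trans ψf.symm)
  have hfeC : ∀ c : Cg, f (eC c) = g c := by
    intro c
    have h1 : ψf (eC c) = (LinearEquiv.ofEq _ _ h.symm) (ψg c) := by
      simp [eC]
    have h2 : (ψf (eC c) : W) = (ψg c : W) := by rw [h1]; rfl
    rw [hψf, hψg] at h2
    exact h2
  let e : V ≃ₗ[K] V := (Submodule.prodEquivOfIsCompl _ _ hg).symm.trans
    ((eK.prodCongr eC).trans (Submodule.prodEquivOfIsCompl _ _ hf))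
  refine ⟨e, ?_⟩
  intro x
  set p := (Submodule.prodEquivOfIsCompl _ _ hg).symm x with hp
  have hx : ((p.1 : V) + (p.2 : V)) = x := by
    have := (Submodule.prodEquivOfIsCompl _ _ hg).apply_symm_apply x
    rwa [Submodule.coe_prodEquivOfIsCompl'] at this
  have he : e x = (eK p.1 : V) + (eC p.2 : V) := by
    simp only [e, LinearEquiv.trans_apply, ← hp, LinearEquiv.prodCongr_apply,
      Submodule.coe_prodEquivOfIsCompl', Prod.map]
  rw [he]
  rw [map_add]
  have hk : f (eK p.1 : V) = 0 := (eK p.1).2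
  rw [hk, zero_add, hfeC, ← hx, map_add]
  have : g (p.1 : V) = 0 := p.1.2
  rw [this, zero_add]



section A
variable {Fq Fqm : Type} [Field Fq] [Field Fqm] [Algebra Fq Fqm] {n : ℕ}

lemma actGL_mul (g h : GL (Fin n) Fq) (v : Fin n → Fqm) :
    actGL Fq Fqm (g * h) v = actGL Fq Fqm g (actGL Fq Fqm h v) := by
  funext r
  simp only [actGL, Units.val_mul, Matrix.mul_apply, map_sum, _root_.map_mul, Finset.sum_mul,
    Finset.mul_sum]
  rw [Finset.sum_comm]
  exact Finset.sum_congr rfl fun s _ => Finset.sum_congr rfl fun t _ => by rw [mul_assoc]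

lemma actGL_one (v : Fin n → Fqm) : actGL Fq Fqm (1 : GL (Fin n) Fq) v = v := by
  funext r
  simp [actGL, Matrix.one_apply, apply_ite]

lemma span_actGL_le (g : GL (Fin n) Fq) (v : Fin n → Fqm) :
    Submodule.span Fq (Set.range (actGL Fq Fqm g v)) ≤ Submodule.span Fq (Set.range v) := by
  rw [Submodule.span_le]
  rintro _ ⟨r, rfl⟩
  refine Submodule.sum_mem _ fun s _ => ?_
  rw [← Algebra.smul_def]
  exact Submodule.smul_mem _ _ (Submodule.subset_span ⟨s, rfl⟩)

lemma partA (v v' : Fin n → Fqm) :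
    (∃ g : GL (Fin n) Fq, actGL Fq Fqm g v = v') ↔
      Submodule.span Fq (Set.range v) = Submodule.span Fq (Set.range v') := by
  constructor
  · rintro ⟨g, rfl⟩
    refine le_antisymm ?_ (span_actGL_le g v)
    have h1 := span_actGL_le g⁻¹ (actGL Fq Fqm g v)
    rwa [← actGL_mul, inv_mul_cancel, actGL_one] at h1
  · intro h
    have hr : LinearMap.range (Fintype.linearCombination Fq v)
        = LinearMap.range (Fintype.linearCombination Fq v') := by
      rw [Fintype.range_linearCombination, Fintype.range_linearCombination, h]
    obtain ⟨e, he⟩ := exists_comp_eq _ _ hr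
    classical
    let A := LinearMap.toMatrix' e.toLinearMap
    let B := LinearMap.toMatrix' e.symm.toLinearMap
    have hAB : A * B = 1 := by
      rw [← LinearMap.toMatrix'_comp]
      have : e.toLinearMap.comp e.symm.toLinearMap = LinearMap.id := by
        ext x : 1; simp
      rw [this, LinearMap.toMatrix'_id]
    have hBA : B * A = 1 := by
      rw [← LinearMap.toMatrix'_comp]
      have : e.symm.toLinearMap.comp e.toLinearMap = LinearMap.id := by
        ext x : 1; simp
      rw [this, LinearMap.toMatrix'_id]
    have hABt : Aᵀ * Bᵀ = 1 := by rw [← Matrix.transpose_mul, hBA, Matrix.transpose_one]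
    have hBAt : Bᵀ * Aᵀ = 1 := by rw [← Matrix.transpose_mul, hAB, Matrix.transpose_one]
    refine ⟨⟨Aᵀ, Bᵀ, hABt, hBAt⟩, ?_⟩
    funext r
    have h1 : actGL Fq Fqm ⟨Aᵀ, Bᵀ, hABt, hBAt⟩ v r
        = Fintype.linearCombination Fq v (fun s => A s r) := by
      rw [Fintype.linearCombination_apply]
      exact Finset.sum_congr rfl fun s _ => (Algebra.smul_def _ _).symm
    rw [h1]
    have h2 : (fun s => A s r) = e (Pi.single r 1) := by
      have : e (Pi.single r 1) = Matrix.toLin' A (Pi.single r 1) := by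
        rw [Matrix.toLin'_toMatrix']; rfl
      rw [this, Matrix.toLin'_apply]
      funext s
      simp [Matrix.mulVec_single_one]
    rw [h2, he, Fintype.linearCombination_apply_single, one_smul]

end A


/-- The number of linearly independent `k`-tuples in a finite vector space. -/
lemma card_linearIndependent' (K V : Type*) [Field K] [Fintype K] [AddCommGroup V] [Module K V]
    [Fintype V] (k : ℕ) :
    Nat.card {v : Fin k → V // LinearIndependent K v}
      = ∏ i ∈ Finset.range k, (Fintype.card V - Fintype.card K ^ i) := by
  classical
  induction k with
  | zero =>
    rw [Finset.range_zero, Finset.prod_empty, Nat.card_eq_one_iff_unique]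
    constructor
    · exact ⟨fun a b => Subtype.ext (funext fun i => i.elim0)⟩
    · exact ⟨⟨fun i => i.elim0, linearIndependent_empty_type⟩⟩
  | succ k ih =>
    have hinit : ∀ v : {v : Fin (k+1) → V // LinearIndependent K v},
        LinearIndependent K (Fin.init v.1) ∧
          v.1 (Fin.last k) ∉ Submodule.span K (Set.range (Fin.init v.1)) := by
      intro v
      exact linearIndependent_fin_snoc.1 (by rw [Fin.snoc_init_self]; exact v.2)
    let f : {v : Fin (k+1) → V // LinearIndependent K v} → {u : Fin k → V // LinearIndependent K u} :=
      fun v => ⟨Fin.init v.1, (hinit v).1⟩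
    have key : ∀ u : {u : Fin k → V // LinearIndependent K u},
        Nat.card {v // f v = u} = Fintype.card V - Fintype.card K ^ k := by
      intro u
      have e : {v // f v = u} ≃ {x : V // x ∉ Submodule.span K (Set.range u.1)} := by
        refine ⟨fun v => ⟨v.1.1 (Fin.last k), ?_⟩,
          fun x => ⟨⟨Fin.snoc u.1 x.1, linearIndependent_fin_snoc.2 ⟨u.2, x.2⟩⟩,
            Subtype.ext (by simp [f, Fin.init_snoc])⟩, ?_, ?_⟩
        · have h2 := (hinit v.1).2
          have h3 : Fin.init v.1.1 = u.1 := congrArg Subtype.val v.2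
          rwa [h3] at h2
        · rintro ⟨⟨v, hv⟩, hfv⟩
          have h3 : Fin.init v = u.1 := congrArg Subtype.val hfv
          refine Subtype.ext (Subtype.ext ?_)
          dsimp
          rw [← h3, Fin.snoc_init_self]
        · rintro ⟨x, hx⟩
          exact Subtype.ext (by simp)
      rw [Nat.card_congr e, Nat.card_eq_fintype_card, Fintype.card_subtype_compl]
      congr 1
      have : Fintype.card {x : V // x ∈ Submodule.span K (Set.range u.1)}
          = Fintype.card (Submodule.span K (Set.range u.1)) := rfl
      rw [this]
      rw [Module.card_eq_pow_finrank (K := K)]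
      congr 1
      rw [finrank_span_eq_card u.2, Fintype.card_fin]
    have := Nat.card_congr (Equiv.sigmaFiberEquiv f).symm
    rw [this, Nat.card_eq_fintype_card, Fintype.card_sigma]
    have : ∀ u, Fintype.card {v // f v = u} = Fintype.card V - Fintype.card K ^ k := by
      intro u; rw [← Nat.card_eq_fintype_card, key u]
    rw [Finset.sum_congr rfl (fun u _ => this u), Finset.sum_const, Finset.card_univ,
      ← Nat.card_eq_fintype_card, ih, smul_eq_mul, Finset.prod_range_succ]

lemma card_grassmannian_mul (K V : Type*) [Field K] [Fintype K] [AddCommGroup V] [Module K V]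
    [Fintype V] (k : ℕ) :
    Nat.card {W : Submodule K V // Module.finrank K W = k}
        * ∏ i ∈ Finset.range k, (Fintype.card K ^ k - Fintype.card K ^ i)
      = ∏ i ∈ Finset.range k, (Fintype.card V - Fintype.card K ^ i) := by
  classical
  have hfinsub : Finite (Submodule K V) :=
    Finite.of_injective (fun W => (W : Set V)) SetLike.coe_injective
  have : Fintype (Submodule K V) := Fintype.ofFinite _
  let f : {v : Fin k → V // LinearIndependent K v} → {W : Submodule K V // Module.finrank K W = k} :=
    fun v => ⟨Submodule.span K (Set.range v.1), by
      rw [finrank_span_eq_card v.2, Fintype.card_fin]⟩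
  have key : ∀ W : {W : Submodule K V // Module.finrank K W = k},
      Nat.card {v // f v = W} = ∏ i ∈ Finset.range k, (Fintype.card K ^ k - Fintype.card K ^ i) := by
    intro W
    have e : {v // f v = W} ≃ {u : Fin k → W.1 // LinearIndependent K u} := by
      refine ⟨fun v => ⟨fun i => ⟨v.1.1 i, ?_⟩, ?_⟩, fun u => ⟨⟨fun i => (u.1 i : V),
        u.2.map' W.1.subtype (Submodule.ker_subtype _)⟩, Subtype.ext ?_⟩, ?_, ?_⟩
      · have h1 : Submodule.span K (Set.range v.1.1) = W.1 := congrArg Subtype.val v.2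
        exact h1 ▸ Submodule.subset_span (Set.mem_range_self i)
      · exact LinearIndependent.of_comp W.1.subtype v.1.2
      · -- span of range of coercion equals W
        have htop : Submodule.span K (Set.range u.1) = ⊤ :=
          u.2.span_eq_top_of_card_eq_finrank' (by rw [Fintype.card_fin, W.2])
        show Submodule.span K (Set.range fun i => (u.1 i : V)) = W.1
        have : (Set.range fun i => (u.1 i : V)) = W.1.subtype '' Set.range u.1 := by
          rw [← Set.range_comp]; rfl
        rw [this, Submodule.span_image, htop, Submodule.map_top, Submodule.range_subtype]
      · rintro ⟨⟨v, hv⟩, hfv⟩; rfl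
      · rintro ⟨u, hu⟩
        exact Subtype.ext (funext fun i => Subtype.ext rfl)
    rw [Nat.card_congr e]
    have : Fintype.card W.1 = Fintype.card K ^ k := by
      rw [Module.card_eq_pow_finrank (K := K), W.2]
    rw [card_linearIndependent', this]
  have hσ := Nat.card_congr (Equiv.sigmaFiberEquiv f).symm
  rw [card_linearIndependent'] at hσ
  rw [hσ]
  conv_rhs => rw [Nat.card_eq_fintype_card, Fintype.card_sigma]
  rw [Finset.sum_congr rfl (fun W _ => by rw [← Nat.card_eq_fintype_card, key W]),
    Finset.sum_const, Finset.card_univ, smul_eq_mul, Nat.card_eq_fintype_card]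


/-- Theorem: the map `v ↦ span_{F_q}{v_1,…,v_n}` induces a bijection from the set of
`GL_n(F_q)`-orbits on `F_{q^m}^n` onto the set of `F_q`-subspaces of `F_{q^m}` of dimension
at most `min(n,m)`; consequently the number of orbits equals
`Σ_{k=0}^{min(n,m)} ∏_{i<k} (q^m−q^i)/(q^k−q^i)`. -/
theorem statement11 (q m n : ℕ) (hq : IsPrimePow q) (hm : 1 ≤ m) (hn : 1 ≤ n)
    (Fq Fqm : Type) [Field Fq] [Fintype Fq] [Field Fqm] [Fintype Fqm] [Algebra Fq Fqm]
    (hcardq : Fintype.card Fq = q) (hcardqm : Fintype.card Fqm = q ^ m) :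
    (∀ v v' : Fin n → Fqm,
      (∃ g : GL (Fin n) Fq, actGL Fq Fqm g v = v') ↔
        Submodule.span Fq (Set.range v) = Submodule.span Fq (Set.range v')) ∧
    (∀ v : Fin n → Fqm,
      Module.finrank Fq (Submodule.span Fq (Set.range v)) ≤ min n m) ∧
    (∀ W : Submodule Fq Fqm, Module.finrank Fq W ≤ min n m →
      ∃ v : Fin n → Fqm, Submodule.span Fq (Set.range v) = W) ∧
    ((Nat.card {O : Set (Fin n → Fqm) //
          ∃ v : Fin n → Fqm, O = {w | ∃ g : GL (Fin n) Fq, actGL Fq Fqm g v = w}} : ℚ)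
      = ∑ k ∈ Finset.range (min n m + 1),
          ∏ i ∈ Finset.range k,
            (((q : ℚ) ^ m - (q : ℚ) ^ i) / ((q : ℚ) ^ k - (q : ℚ) ^ i))) := by
  classical
  have hq2 : 2 ≤ q := hq.two_le
  have hfr : Module.finrank Fq Fqm = m := by
    have h := Module.card_eq_pow_finrank (K := Fq) (V := Fqm)
    rw [hcardq, hcardqm] at h
    exact (Nat.pow_right_injective hq2 h.symm)
  -- Part B
  have partB : ∀ v : Fin n → Fqm,
      Module.finrank Fq (Submodule.span Fq (Set.range v)) ≤ min n m := by
    intro v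
    refine le_min ?_ ?_
    · have h1 : Submodule.span Fq (Set.range v)
          = LinearMap.range (Fintype.linearCombination Fq v) :=
        (Fintype.range_linearCombination _ _).symm
      rw [h1]
      refine (LinearMap.finrank_range_le _).trans_eq ?_
      simp [Module.finrank_pi]
    · exact (Submodule.finrank_le _).trans_eq hfr
  -- Part C
  have partC : ∀ W : Submodule Fq Fqm, Module.finrank Fq W ≤ min n m →
      ∃ v : Fin n → Fqm, Submodule.span Fq (Set.range v) = W := by
    intro W hW
    set k := Module.finrank Fq W with hkdef
    have hk : k ≤ n := hW.trans (min_le_left n m)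
    let b := Module.finBasis Fq W
    refine ⟨fun i => if h : (i : ℕ) < k then (b ⟨i, h⟩ : Fqm) else 0, ?_⟩
    have hWspan : Submodule.span Fq (Set.range fun j : Fin k => (b j : Fqm)) = W := by
      have h2 : (Set.range fun j : Fin k => (b j : Fqm)) = W.subtype '' Set.range b := by
        rw [← Set.range_comp]; rfl
      rw [h2, Submodule.span_image, b.span_eq, Submodule.map_top, Submodule.range_subtype]
    refine le_antisymm ?_ ?_
    · rw [Submodule.span_le]
      rintro _ ⟨i, rfl⟩
      dsimp only
      split
      · exact (b _).2
      · exact W.zero_mem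
    · refine le_trans (le_of_eq hWspan.symm) (Submodule.span_mono ?_)
      rintro _ ⟨j, rfl⟩
      exact ⟨⟨j.1, lt_of_lt_of_le j.2 hk⟩, by simp [j.2]⟩
  refine ⟨partA, partB, partC, ?_⟩
  -- Part D
  haveI : Finite (Submodule Fq Fqm) :=
    Finite.of_injective (fun W => (W : Set Fqm)) SetLike.coe_injective
  haveI : Fintype (Submodule Fq Fqm) := Fintype.ofFinite _
  set t := min n m with ht
  -- orbit set is in bijection with subspaces of dimension at most t
  have hcard1 : Nat.card {W : Submodule Fq Fqm // Module.finrank Fq W ≤ t}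
      = Nat.card {O : Set (Fin n → Fqm) //
          ∃ v : Fin n → Fqm, O = {w | ∃ g : GL (Fin n) Fq, actGL Fq Fqm g v = w}} := by
    have F : ∀ W : {W : Submodule Fq Fqm // Module.finrank Fq W ≤ t},
        ∃ vW : Fin n → Fqm, Submodule.span Fq (Set.range vW) = W.1 :=
      fun W => partC W.1 W.2
    choose vW hvW using F
    refine Nat.card_eq_of_bijective
      (fun W => ⟨{w | Submodule.span Fq (Set.range w) = W.1}, vW W, ?_⟩) ⟨?_, ?_⟩
    · ext w
      simp only [Set.mem_setOf_eq]
      exact ⟨fun h => (partA (vW W) w).2 ((hvW W).trans h.symm),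
        fun hg => ((partA (vW W) w).1 hg).symm.trans (hvW W)⟩
    · intro W W' hWW'
      have hset : {w | Submodule.span Fq (Set.range w) = W.1}
          = {w | Submodule.span Fq (Set.range w) = W'.1} := congrArg Subtype.val hWW'
      have h1 : Submodule.span Fq (Set.range (vW W)) = W'.1 := by
        rw [Set.ext_iff] at hset
        exact (hset (vW W)).1 (hvW W)
      exact Subtype.ext ((hvW W).symm.trans h1)
    · rintro ⟨O, v, hO⟩
      refine ⟨⟨Submodule.span Fq (Set.range v), partB v⟩, Subtype.ext ?_⟩
      show {w | Submodule.span Fq (Set.range w) = Submodule.span Fq (Set.range v)} = O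
      rw [hO]
      ext w
      simp only [Set.mem_setOf_eq]
      exact ⟨fun h => (partA v w).2 h.symm, fun hg => ((partA v w).1 hg).symm⟩
  rw [← hcard1]
  -- split according to dimension
  have hcard2 : Nat.card {W : Submodule Fq Fqm // Module.finrank Fq W ≤ t}
      = ∑ k ∈ Finset.range (t + 1),
          Nat.card {W : Submodule Fq Fqm // Module.finrank Fq W = k} := by
    rw [Nat.card_eq_fintype_card, Fintype.card_subtype]
    have hmem : ∀ W ∈ Finset.univ.filter (fun W : Submodule Fq Fqm => Module.finrank Fq W ≤ t),
        Module.finrank Fq W ∈ Finset.range (t + 1) := by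
      intro W hWmem
      rw [Finset.mem_filter] at hWmem
      rw [Finset.mem_range]
      omega
    rw [Finset.card_eq_sum_card_fiberwise hmem]
    refine Finset.sum_congr rfl fun k hk => ?_
    rw [Finset.mem_range] at hk
    rw [Nat.card_eq_fintype_card, Fintype.card_subtype, Finset.filter_filter]
    congr 1
    refine Finset.filter_congr fun W _ => ?_
    constructor
    · rintro ⟨-, h⟩; exact h
    · rintro h; exact ⟨by omega, h⟩
  rw [hcard2]
  push_cast
  refine Finset.sum_congr rfl fun k hk => ?_
  rw [Finset.mem_range] at hk
  have hk_le_m : k ≤ m := by omega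
  -- the Grassmannian count
  have hGr := card_grassmannian_mul Fq Fqm k
  rw [hcardq, hcardqm] at hGr
  have hcast : ((Nat.card {W : Submodule Fq Fqm // Module.finrank Fq W = k} : ℚ)
        * ∏ i ∈ Finset.range k, ((q : ℚ) ^ k - (q : ℚ) ^ i))
      = ∏ i ∈ Finset.range k, ((q : ℚ) ^ m - (q : ℚ) ^ i) := by
    have h1 : ((∏ i ∈ Finset.range k, (q ^ k - q ^ i) : ℕ) : ℚ)
        = ∏ i ∈ Finset.range k, ((q : ℚ) ^ k - (q : ℚ) ^ i) := by
      rw [Nat.cast_prod]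
      refine Finset.prod_congr rfl fun i hi => ?_
      rw [Finset.mem_range] at hi
      rw [Nat.cast_sub (Nat.pow_le_pow_right (by omega) hi.le)]
      push_cast; ring
    have h2 : ((∏ i ∈ Finset.range k, (q ^ m - q ^ i) : ℕ) : ℚ)
        = ∏ i ∈ Finset.range k, ((q : ℚ) ^ m - (q : ℚ) ^ i) := by
      rw [Nat.cast_prod]
      refine Finset.prod_congr rfl fun i hi => ?_
      rw [Finset.mem_range] at hi
      rw [Nat.cast_sub (Nat.pow_le_pow_right (by omega) (by omega))]
      push_cast; ring
    rw [← h1, ← h2, ← Nat.cast_mul, hGr]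
  have hD : (∏ i ∈ Finset.range k, ((q : ℚ) ^ k - (q : ℚ) ^ i)) ≠ 0 := by
    refine Finset.prod_ne_zero_iff.2 fun i hi => ?_
    rw [Finset.mem_range] at hi
    have : (q : ℚ) ^ i < (q : ℚ) ^ k := by
      have := Nat.pow_lt_pow_right (by omega : 1 < q) hi
      exact_mod_cast this
    exact sub_ne_zero.2 (ne_of_gt this)
  rw [Finset.prod_div_distrib, eq_div_iff hD]
  exact hcast
end
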